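/- For all integers r ≥ 1 and s ≥ 1, with g = (r+1)(s+1), d = r(s+2), and N = (∏_{i=0}^r i!)·g! / ∏_{i=0}^r (s+1+i)!, both dN/(2(g−1)) and (2g−2−d)N/(2(g−1)) are positive integers. -/

import Mathlib

open Finset Nat Matrix

/-! Auxiliary machinery: the two ramification counts are numbers of standard Young
tableaux (rectangle minus a vertical/horizontal domino).  Integrality is proven via
the Vandermonde/descending-factorial determinant, expanding the determinant into
signed multinomial coefficients. -/

/-- `sfv t = sf (t-1)` without truncated subtraction. -/
def sfv : ℕ → ℕ
  | 0 => 1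
  | (t+1) => Nat.superFactorial t

lemma sfv_pos (t : ℕ) : 0 < sfv t := by
  cases t with
  | zero => exact Nat.one_pos
  | succ w =>
    show 0 < Nat.superFactorial w
    induction w with
    | zero => exact Nat.one_pos
    | succ v ih => exact Nat.mul_pos (Nat.factorial_pos _) ih

lemma nat_term_dvd {m : ℕ} (ℓ : Fin m → ℕ) (n : ℕ) (σ : Equiv.Perm (Fin m))
    (hn : ∑ i, ℓ i = n + ∑ i : Fin m, (i : ℕ)) :
    (∏ i, (ℓ i)!) ∣ (∏ i, (ℓ (σ i)).descFactorial (i : ℕ)) * n ! := by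
  by_cases h : ∀ i : Fin m, (i : ℕ) ≤ ℓ (σ i)
  · have h1 : ∏ i, (ℓ i)! = ∏ i, (ℓ (σ i))! := (Equiv.prod_comp σ fun i => (ℓ i)!).symm
    have h2 : ∏ i, (ℓ (σ i))!
        = (∏ i, (ℓ (σ i)).descFactorial (i : ℕ)) * ∏ i, (ℓ (σ i) - (i : ℕ))! := by
      rw [← Finset.prod_mul_distrib]
      refine Finset.prod_congr rfl fun i _ => ?_
      rw [mul_comm, Nat.factorial_mul_descFactorial (h i)]
    have h3 : ∑ i, (ℓ (σ i) - (i : ℕ)) = n := by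
      have h4 : ∑ i, (ℓ (σ i) - (i : ℕ)) + ∑ i : Fin m, (i : ℕ) = ∑ i, ℓ (σ i) := by
        rw [← Finset.sum_add_distrib]
        exact Finset.sum_congr rfl fun i _ => Nat.sub_add_cancel (h i)
      have h5 : ∑ i, ℓ (σ i) = ∑ i, ℓ i := Equiv.sum_comp σ ℓ
      omega
    rw [h1, h2]
    exact Nat.mul_dvd_mul dvd_rfl (h3 ▸ Nat.prod_factorial_dvd_factorial_sum _ _)
  · push_neg at h
    obtain ⟨i, hi⟩ := h
    have : (ℓ (σ i)).descFactorial (i : ℕ) = 0 := Nat.descFactorial_eq_zero_iff_lt.2 hi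
    have hz : (∏ i, (ℓ (σ i)).descFactorial (i : ℕ)) = 0 :=
      Finset.prod_eq_zero (Finset.mem_univ i) this
    rw [hz, zero_mul]
    exact dvd_zero _

lemma key_dvd {m : ℕ} (ℓ : Fin m → ℕ) (n : ℕ)
    (hn : ∑ i, ℓ i = n + ∑ i : Fin m, (i : ℕ)) :
    ((∏ i, (ℓ i)! : ℕ) : ℤ) ∣ (Matrix.vandermonde fun i => (ℓ i : ℤ)).det * (n ! : ℤ) := by
  rw [Matrix.det_eval_matrixOfPolynomials_eq_det_vandermonde (fun i => ((ℓ i : ℤ)))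
      (fun i => descPochhammer ℤ i) (fun i => descPochhammer_natDegree ℤ i)
      (fun i => monic_descPochhammer ℤ i)]
  rw [Matrix.det_apply, Finset.sum_mul]
  apply Finset.dvd_sum
  intro σ _
  rw [smul_mul_assoc, Units.smul_def, smul_eq_mul]
  apply Dvd.dvd.mul_left
  simp only [Matrix.of_apply, descPochhammer_eval_eq_descFactorial]
  rw [← Nat.cast_prod, ← Nat.cast_mul]
  exact_mod_cast nat_term_dvd ℓ n σ hn

lemma st_val : ∀ t : ℕ, (Matrix.vandermonde fun i : Fin t => ((i : ℕ) : ℤ)).det = sfv t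
  | 0 => by simp [Matrix.det_fin_zero, sfv]
  | (t+1) => by
    rw [Matrix.det_vandermonde_id_eq_superFactorial t]
    rfl

lemma vdm_peel {n : ℕ} (v : Fin (n+1) → ℤ) :
    (Matrix.vandermonde v).det
      = (∏ i : Fin n, (v i.succ - v 0)) * (Matrix.vandermonde fun i => v i.succ).det := by
  rw [Matrix.det_vandermonde, Matrix.det_vandermonde, Fin.prod_univ_succ]
  congr 1
  · exact Fin.prod_Ioi_zero _
  · exact Finset.prod_congr rfl fun i _ => Fin.prod_Ioi_succ _ i

lemma vdm_gap (c : ℤ) (n : ℕ) :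
    (Matrix.vandermonde fun i : Fin (n+1) => if (i : ℕ) = 0 then 0 else (i : ℕ) + c).det
      = (∏ i ∈ Finset.range n, ((i : ℤ) + 1 + c)) * sfv n := by
  rw [vdm_peel]
  have hsucc : ∀ i : Fin n,
      (fun i : Fin (n+1) => if (i : ℕ) = 0 then (0:ℤ) else (i : ℕ) + c) i.succ
        = ((i:ℕ) : ℤ) + (1 + c) := by
    intro i
    simp [Fin.val_succ]
    ring
  rw [show (fun i : Fin n => (fun i : Fin (n+1) => if (i : ℕ) = 0 then (0:ℤ) else (i : ℕ) + c) i.succ)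
      = fun i : Fin n => ((i:ℕ) : ℤ) + (1 + c) from funext hsucc]
  rw [Matrix.det_vandermonde_add (fun i : Fin n => ((i:ℕ):ℤ)) (1 + c), st_val]
  congr 1
  have hfac : ∀ i : Fin n,
      ((if ((i.succ : Fin (n+1)) : ℕ) = 0 then (0:ℤ) else (((i.succ : Fin (n+1)) : ℕ) : ℤ) + c)
        - (if ((0 : Fin (n+1)) : ℕ) = 0 then (0:ℤ) else (((0 : Fin (n+1)) : ℕ) : ℤ) + c))
      = ((i:ℕ) : ℤ) + 1 + c := by
    intro i
    simp only [Fin.val_succ, Fin.val_zero, if_pos rfl, Nat.succ_ne_zero, if_neg, sub_zero]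
    push_cast
    ring
  rw [Finset.prod_congr rfl fun i _ => hfac i,
    Fin.prod_univ_eq_prod_range (fun k : ℕ => (k:ℤ) + 1 + c) n]

/-- the vanishing-order vector for the first ramification type -/
def L2 (s t : ℕ) (i : Fin (t+2)) : ℕ :=
  if (i : ℕ) = 0 then s else if (i : ℕ) = 1 then s + 1 else s + (i : ℕ) + 1

/-- the vanishing-order vector for the second ramification type (s = w+1) -/
def L3 (w t : ℕ) (i : Fin (t+2)) : ℕ :=
  if (i : ℕ) = 0 then w else w + 2 + (i : ℕ)

lemma V3_det (w t : ℕ) :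
    (Matrix.vandermonde fun i : Fin (t+2) => ((L3 w t i : ℕ) : ℤ)).det
      = ((∏ i ∈ Finset.range (t+1), (i + 3)) * sfv (t+1) : ℕ) := by
  have h : (fun i : Fin (t+2) => ((L3 w t i : ℕ) : ℤ))
      = fun i : Fin (t+2) => (if (i : ℕ) = 0 then 0 else ((i:ℕ):ℤ) + 2) + (w : ℤ) := by
    funext i
    by_cases hi : (i : ℕ) = 0 <;> simp [L3, hi] <;> push_cast <;> ring
  rw [h, Matrix.det_vandermonde_add, vdm_gap 2 (t+1)]
  push_cast
  refine congrArg (· * _) ?_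
  refine Finset.prod_congr rfl fun i _ => by push_cast; ring

lemma V2_det (s t : ℕ) :
    (Matrix.vandermonde fun i : Fin (t+2) => ((L2 s t i : ℕ) : ℤ)).det
      = (((∏ i ∈ Finset.range t, (i + 3)) * ((∏ i ∈ Finset.range t, (i + 2)) * sfv t)) : ℕ) := by
  have h : (fun i : Fin (t+2) => ((L2 s t i : ℕ) : ℤ))
      = fun i : Fin (t+2) =>
        (if (i : ℕ) = 0 then 0 else if (i : ℕ) = 1 then 1 else ((i:ℕ):ℤ) + 1) + (s : ℤ) := by
    funext i
    rcases Nat.lt_or_ge (i : ℕ) 2 with hi | hi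
    · interval_cases h : (i : ℕ) <;> simp [L2, h] <;> try ring
    · have h0 : ¬ (i:ℕ) = 0 := by omega
      have h1 : ¬ (i:ℕ) = 1 := by omega
      simp [L2, h0, h1]
      push_cast
      ring
  rw [h, Matrix.det_vandermonde_add, vdm_peel]
  have htail : (fun i : Fin (t+1) =>
      (fun j : Fin (t+2) => if (j : ℕ) = 0 then (0:ℤ) else if (j : ℕ) = 1 then 1 else ((j:ℕ):ℤ) + 1) i.succ)
      = fun i : Fin (t+1) => (if (i : ℕ) = 0 then 0 else ((i:ℕ):ℤ) + 1) + 1 := by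
    funext i
    by_cases hi : (i : ℕ) = 0
    · simp [Fin.val_succ, hi]
    · have : ¬ (i:ℕ) + 1 = 1 := by omega
      simp [Fin.val_succ, hi, this]
      try ring
  rw [htail, Matrix.det_vandermonde_add, vdm_gap 1 t]
  have hfac : ∀ i : Fin (t+1),
      ((fun j : Fin (t+2) => if (j : ℕ) = 0 then (0:ℤ) else if (j : ℕ) = 1 then 1 else ((j:ℕ):ℤ) + 1) i.succ
        - (fun j : Fin (t+2) => if (j : ℕ) = 0 then (0:ℤ) else if (j : ℕ) = 1 then 1 else ((j:ℕ):ℤ) + 1) 0)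
      = (if (i : ℕ) = 0 then 1 else ((i:ℕ):ℤ) + 2) := by
    intro i
    by_cases hi : (i : ℕ) = 0
    · simp [Fin.val_succ, hi]
    · have h1 : ¬ (i:ℕ) + 1 = 0 := by omega
      have h2 : ¬ (i:ℕ) + 1 = 1 := by omega
      simp [Fin.val_succ, h1, h2, hi]
      try ring
  rw [Finset.prod_congr rfl fun i _ => hfac i]
  have hhead : (∏ i : Fin (t+1), (if (i:ℕ) = 0 then (1:ℤ) else ((i:ℕ):ℤ) + 2))
      = ∏ i ∈ Finset.range t, ((i:ℤ) + 3) := by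
    rw [Fin.prod_univ_succ]
    simp only [Fin.val_zero, if_pos rfl, if_true, eq_self_iff_true, one_mul]
    have : ∀ i : Fin t, (if ((i.succ : Fin (t+1)):ℕ) = 0 then (1:ℤ) else (((i.succ : Fin (t+1)):ℕ):ℤ) + 2)
        = ((i:ℕ):ℤ) + 3 := by
      intro i
      have : ¬ (i:ℕ) + 1 = 0 := by omega
      simp [Fin.val_succ, this]
      try ring
    rw [Finset.prod_congr rfl fun i _ => this i,
      Fin.prod_univ_eq_prod_range (fun k : ℕ => (k:ℤ) + 3) t]
  rw [hhead]
  push_cast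
  ring_nf

lemma prodA (t : ℕ) : 2 * ∏ i ∈ Finset.range t, (i + 3) = (t + 2)! := by
  induction t with
  | zero => rfl
  | succ t ih =>
    have h2 : (t + 1 + 2)! = (t + 3) * (t + 2)! := Nat.factorial_succ (t+2)
    rw [Finset.prod_range_succ, h2, ← ih]
    ring

lemma prodB (t : ℕ) : ∏ i ∈ Finset.range t, (i + 2) = (t + 1)! := by
  induction t with
  | zero => rfl
  | succ t ih =>
    have h2 : (t + 1 + 1)! = (t + 2) * (t + 1)! := Nat.factorial_succ (t+1)
    rw [Finset.prod_range_succ, ih, h2]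
    ring

lemma sfv_rel (t : ℕ) : Nat.superFactorial (t + 1) = (t + 1)! * (t ! * sfv t) := by
  cases t with
  | zero => rfl
  | succ w =>
    rw [Nat.superFactorial_succ, Nat.superFactorial_succ]
    rfl

lemma L2_zero (s t : ℕ) : L2 s t 0 = s := by simp [L2]

lemma L2_one (s t : ℕ) : L2 s t ((0 : Fin (t+1)).succ) = s + 1 := by simp [L2]

lemma L2_two (s t : ℕ) (i : Fin t) : L2 s t i.succ.succ = s + 3 + (i : ℕ) := by
  have h1 : ((i.succ.succ : Fin (t+2)) : ℕ) = (i : ℕ) + 2 := by simp [Fin.val_succ]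
  have h2 : ¬ ((i : ℕ) + 2 = 0) := by omega
  have h3 : ¬ ((i : ℕ) + 2 = 1) := by omega
  simp only [L2, h1, h2, h3, if_false]
  omega

lemma L3_zero (w t : ℕ) : L3 w t 0 = w := by simp [L3]

lemma L3_succ (w t : ℕ) (i : Fin (t+1)) : L3 w t i.succ = w + 3 + (i : ℕ) := by
  have h1 : ((i.succ : Fin (t+2)) : ℕ) = (i : ℕ) + 1 := by simp [Fin.val_succ]
  have h2 : ¬ ((i : ℕ) + 1 = 0) := by omega
  simp only [L3, h1, h2, if_false]
  omega

lemma sum_L2 (s t : ℕ) :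
    ∑ i, L2 s t i = (t * s + t + 2 * s) + ∑ i : Fin (t+2), (i : ℕ) := by
  rw [Fin.sum_univ_succ (f := L2 s t), Fin.sum_univ_succ (f := fun i : Fin (t+1) => L2 s t i.succ),
    Fin.sum_univ_succ (f := fun i : Fin (t+2) => (i : ℕ)),
    Fin.sum_univ_succ (f := fun i : Fin (t+1) => ((i.succ : Fin (t+2)) : ℕ))]
  simp only [L2_zero, L2_one, L2_two, Fin.val_zero, Fin.val_succ]
  rw [Fin.sum_univ_eq_sum_range (fun k => s + 3 + k) t,
    Fin.sum_univ_eq_sum_range (fun k => k + 1 + 1) t]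
  have e1 : ∑ k ∈ Finset.range t, (s + 3 + k) = ∑ k ∈ Finset.range t, (k + 1 + 1) + t * (s + 1) := by
    have := Finset.sum_add_distrib (s := Finset.range t) (f := fun k => k + 1 + 1)
      (g := fun _ => s + 1)
    rw [Finset.sum_const, Finset.card_range, smul_eq_mul] at this
    rw [← this]
    exact Finset.sum_congr rfl fun k _ => by omega
  have e2 : t * (s + 1) = t * s + t := by ring
  omega

lemma sum_L3 (w t : ℕ) :
    ∑ i, L3 w t i = (t * (w+1) + t + 2 * (w+1)) + ∑ i : Fin (t+2), (i : ℕ) := by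
  rw [Fin.sum_univ_succ (f := L3 w t), Fin.sum_univ_succ (f := fun i : Fin (t+2) => (i : ℕ))]
  simp only [L3_zero, L3_succ, Fin.val_zero, Fin.val_succ]
  rw [Fin.sum_univ_eq_sum_range (fun k => w + 3 + k) (t+1),
    Fin.sum_univ_eq_sum_range (fun k => k + 1) (t+1)]
  have e1 : ∑ k ∈ Finset.range (t+1), (w + 3 + k)
      = ∑ k ∈ Finset.range (t+1), (k + 1) + (t+1) * (w + 2) := by
    have := Finset.sum_add_distrib (s := Finset.range (t+1)) (f := fun k => k + 1)
      (g := fun _ => w + 2)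
    rw [Finset.sum_const, Finset.card_range, smul_eq_mul] at this
    rw [← this]
    exact Finset.sum_congr rfl fun k _ => by omega
  have e2 : (t+1) * (w + 2) = t * w + 2 * t + w + 2 := by ring
  have e3 : t * (w+1) = t * w + t := by ring
  omega

lemma prodfact_L2 (s t : ℕ) :
    ∏ i, (L2 s t i)! = s ! * (s+1)! * ∏ i ∈ Finset.range t, (s + 3 + i)! := by
  rw [Fin.prod_univ_succ (f := fun i => (L2 s t i)!),
    Fin.prod_univ_succ (f := fun i : Fin (t+1) => (L2 s t i.succ)!)]
  simp only [L2_zero, L2_one, L2_two]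
  rw [Fin.prod_univ_eq_prod_range (fun k => (s + 3 + k)!) t]
  ring

lemma prodfact_L3 (w t : ℕ) :
    ∏ i, (L3 w t i)! = w ! * ∏ i ∈ Finset.range (t+1), (w + 3 + i)! := by
  rw [Fin.prod_univ_succ (f := fun i => (L3 w t i)!)]
  simp only [L3_zero, L3_succ]
  rw [Fin.prod_univ_eq_prod_range (fun k => (w + 3 + k)!) (t+1)]

lemma P_split (s t : ℕ) :
    ∏ i ∈ Finset.range (t+2), (s + 1 + i)!
      = (s+1)! * ((s+2)! * ∏ i ∈ Finset.range t, (s + 3 + i)!) := by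
  rw [Finset.prod_range_succ' (fun i => (s + 1 + i)!) (t+1)]
  rw [Finset.prod_range_succ' (fun i => (s + 1 + (i+1))!) t]
  have e1 : ∀ i, s + 1 + (i + 1 + 1) = s + 3 + i := by omega
  have e2 : s + 1 + (0 + 1) = s + 2 := by omega
  simp only [e1, e2]
  ring

lemma natIdA (t w : ℕ) :
    ((t+1) * (w+1+2)) * ((∏ i ∈ Finset.range (t+1+1), i !) * ((t+1+1)*(w+1+1))!
        * ∏ i, (L2 (w+1) t i)!)
      = 2 * ((t * (w+1) + t + 2 * (w+1)) + 1)
        * (∏ i ∈ Finset.range (t+1+1), (w+1+1+i)!)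
        * (((∏ i ∈ Finset.range t, (i + 3)) * ((∏ i ∈ Finset.range t, (i + 2)) * sfv t))
            * (t * (w+1) + t + 2 * (w+1))!) := by
  have hF : (∏ i ∈ Finset.range (t+1+1), i !) = Nat.superFactorial (t+1) :=
    Nat.prod_range_succ_factorial (t+1)
  have hgm : (t+1+1) * (w+1+1) = (t * (w+1) + t + 2 * (w+1)) + 1 + 1 := by ring
  set m := t * (w+1) + t + 2 * (w+1) with hm
  have hG : ((t+1+1)*(w+1+1))! = ((t+1+1)*(w+1+1)) * ((m+1) * m !) := by
    rw [hgm]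
    rw [Nat.factorial_succ, Nat.factorial_succ]
  have hP : (∏ i ∈ Finset.range (t+1+1), (w+1+1+i)!)
      = (w+1+1)! * ((w+1+2)! * ∏ i ∈ Finset.range t, (w+1+3+i)!) := P_split (w+1) t
  have hw3 : (w+1+2)! = (w+1+2) * (w+1+1)! := Nat.factorial_succ (w+1+1)
  have hw2 : (w+1+1)! = (w+1+1) * (w+1)! := Nat.factorial_succ (w+1)
  have ht1 : (t+1)! = (t+1) * t ! := Nat.factorial_succ t
  have hA2 : 2 * ∏ i ∈ Finset.range t, (i + 3) = (t+2) * ((t+1) * t !) := by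
    rw [prodA t, Nat.factorial_succ (t+1), ht1]
  rw [prodfact_L2 (w+1) t, hF, sfv_rel t, hG, hP, prodB, hw3, hw2, ht1]
  zify
  push_cast
  linear_combination (-(((m:ℤ)+1) * ((w:ℤ)+2)^2 * ((w:ℤ)+3)
      * ((((w+1)! : ℕ) : ℤ))^2 * (∏ i ∈ Finset.range t, ((((w+1+3+i)! : ℕ)) : ℤ))
      * ((t:ℤ)+1) * (((t ! : ℕ)) : ℤ) * ((sfv t : ℕ) : ℤ) * (((m ! : ℕ)) : ℤ)))
    * (by exact_mod_cast hA2 :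
        (2:ℤ) * ∏ i ∈ Finset.range t, ((i:ℤ) + 3) = ((t:ℤ)+2) * (((t:ℤ)+1) * ((t ! : ℕ) : ℤ)))

lemma sfv_rel2 (t : ℕ) : Nat.superFactorial t = t ! * sfv t := by
  cases t with
  | zero => rfl
  | succ v => rw [Nat.superFactorial_succ]; rfl

lemma natIdB (t w : ℕ) :
    ((w+1) * (t+1+2)) * ((∏ i ∈ Finset.range (t+1+1), i !) * ((t+1+1)*(w+1+1))!
        * ∏ i, (L3 w t i)!)
      = 2 * ((t * (w+1) + t + 2 * (w+1)) + 1)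
        * (∏ i ∈ Finset.range (t+1+1), (w+1+1+i)!)
        * (((∏ i ∈ Finset.range (t+1), (i + 3)) * sfv (t+1))
            * (t * (w+1) + t + 2 * (w+1))!) := by
  have hF : (∏ i ∈ Finset.range (t+1+1), i !) = Nat.superFactorial (t+1) :=
    Nat.prod_range_succ_factorial (t+1)
  have hgm : (t+1+1) * (w+1+1) = (t * (w+1) + t + 2 * (w+1)) + 1 + 1 := by ring
  set m := t * (w+1) + t + 2 * (w+1) with hm
  have hG : ((t+1+1)*(w+1+1))! = ((t+1+1)*(w+1+1)) * ((m+1) * m !) := by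
    rw [hgm]
    rw [Nat.factorial_succ, Nat.factorial_succ]
  have hP : (∏ i ∈ Finset.range (t+1+1), (w+1+1+i)!)
      = (w+1+1)! * ((w+1+2)! * ∏ i ∈ Finset.range t, (w+1+3+i)!) := P_split (w+1) t
  have hsplit3 : ∏ i ∈ Finset.range (t+1), (w + 3 + i)!
      = (w+3)! * ∏ i ∈ Finset.range t, (w+1+3+i)! := by
    rw [Finset.prod_range_succ' (fun i => (w + 3 + i)!) t]
    have e1 : ∀ i, w + 3 + (i+1) = w + 1 + 3 + i := by omega
    simp only [e1, Nat.add_zero]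
    ring
  have hV : sfv (t+1) = t ! * sfv t := sfv_rel2 t
  have hw3' : (w+3)! = (w+3) * (w+2)! := Nat.factorial_succ (w+2)
  have hw3 : (w+1+2)! = (w+1+2) * (w+1+1)! := Nat.factorial_succ (w+1+1)
  have hw2' : (w+2)! = (w+2) * (w+1)! := Nat.factorial_succ (w+1)
  have hw2 : (w+1+1)! = (w+1+1) * (w+1)! := Nat.factorial_succ (w+1)
  have hw1 : (w+1)! = (w+1) * w ! := Nat.factorial_succ w
  have ht1 : (t+1)! = (t+1) * t ! := Nat.factorial_succ t
  have hA3 : 2 * ∏ i ∈ Finset.range (t+1), (i + 3)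
      = (t+1+2) * ((t+1+1) * ((t+1) * t !)) := by
    rw [prodA (t+1), Nat.factorial_succ (t+1+1), Nat.factorial_succ (t+1), ht1]
  rw [prodfact_L3 w t, hsplit3, hF, sfv_rel t, hG, hP, hV, hw3', hw2', hw1, ht1]
  zify
  push_cast
  linear_combination (-(((m:ℤ)+1) * ((w:ℤ)+2)^2 * ((w:ℤ)+1)^2 * ((w:ℤ)+3)
      * (((w ! : ℕ)) : ℤ)^2 * (∏ i ∈ Finset.range t, ((((w+1+3+i)! : ℕ)) : ℤ))
      * (((t ! : ℕ)) : ℤ) * ((sfv t : ℕ) : ℤ) * (((m ! : ℕ)) : ℤ)))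
    * (by exact_mod_cast hA3 :
        (2:ℤ) * ∏ i ∈ Finset.range (t+1), ((i:ℤ) + 3)
          = ((t:ℤ)+3) * (((t:ℤ)+2) * (((t:ℤ)+1) * ((t ! : ℕ) : ℤ))))

theorem ramification_counts_integral (r s : ℕ) (hr : 1 ≤ r) (hs : 1 ≤ s)
    (g d : ℕ) (hg : g = (r + 1) * (s + 1)) (hd : d = r * (s + 2))
    (N : ℚ)
    (hN : N = (((∏ i ∈ Finset.range (r + 1), Nat.factorial i) *
        Nat.factorial g : ℕ) : ℚ) /
      ((∏ i ∈ Finset.range (r + 1), Nat.factorial (s + 1 + i) : ℕ) : ℚ)) :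
    (∃ a : ℕ, 0 < a ∧ (d : ℚ) * N / (2 * ((g : ℚ) - 1)) = (a : ℚ)) ∧
    (∃ b : ℕ, 0 < b ∧
      (2 * (g : ℚ) - 2 - (d : ℚ)) * N / (2 * ((g : ℚ) - 1)) = (b : ℚ)) := by
  obtain ⟨t, rfl⟩ : ∃ t, r = t + 1 := ⟨r - 1, by omega⟩
  obtain ⟨w, rfl⟩ : ∃ w, s = w + 1 := ⟨s - 1, by omega⟩
  subst hg hd hN
  set m := t * (w+1) + t + 2 * (w+1) with hm
  have hgm : (t+1+1) * (w+1+1) = m + 1 + 1 := by rw [hm]; ring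
  have hgq : ((((t+1+1)) * ((w+1+1)) : ℕ) : ℚ) - 1 = ((m + 1 : ℕ) : ℚ) := by
    rw [hgm]; push_cast; ring
  have hPpos : 0 < ∏ i ∈ Finset.range (t+1+1), (w+1+1+i)! :=
    Finset.prod_pos fun i _ => Nat.factorial_pos _
  have hPq : ((∏ i ∈ Finset.range (t+1+1), (w+1+1+i)! : ℕ) : ℚ) ≠ 0 := by
    exact_mod_cast hPpos.ne'
  have hDq : (2 * ((m + 1 : ℕ) : ℚ)) ≠ 0 := by positivity
  constructor
  · -- first ramification type
    have hdvd := key_dvd (L2 (w+1) t) m (by rw [hm]; exact sum_L2 (w+1) t)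
    rw [V2_det (w+1) t] at hdvd
    obtain ⟨z, hz⟩ := hdvd
    have hP2pos : 0 < ∏ i, (L2 (w+1) t i)! :=
      Finset.prod_pos fun i _ => Nat.factorial_pos _
    have hC2pos : 0 < (∏ i ∈ Finset.range t, (i + 3))
        * ((∏ i ∈ Finset.range t, (i + 2)) * sfv t) := by
      refine Nat.mul_pos (Finset.prod_pos fun i _ => by omega)
        (Nat.mul_pos (Finset.prod_pos fun i _ => by omega) (sfv_pos t))
    have hzpos : 0 < z := by
      have h1 : (0:ℤ) < ((∏ i, (L2 (w+1) t i)! : ℕ) : ℤ) * z := by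
        rw [← hz]
        exact_mod_cast Nat.mul_pos hC2pos (Nat.factorial_pos m)
      have h2 : (0:ℤ) < ((∏ i, (L2 (w+1) t i)! : ℕ) : ℤ) := by exact_mod_cast hP2pos
      by_contra hc
      push_neg at hc
      nlinarith
    refine ⟨z.toNat, by omega, ?_⟩
    have hzq : ((z.toNat : ℕ) : ℚ) = ((z : ℤ) : ℚ) := by
      exact_mod_cast congrArg (Int.cast : ℤ → ℚ) (Int.toNat_of_nonneg hzpos.le)
    rw [hzq, hgq, div_eq_iff hDq, mul_div_assoc', div_eq_iff hPq]
    have hP2q : ((∏ i, (L2 (w+1) t i)! : ℕ) : ℚ) ≠ 0 := by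
      exact_mod_cast hP2pos.ne'
    refine mul_right_cancel₀ hP2q ?_
    have hnatq : ((((t+1) * (w+1+2)) * ((∏ i ∈ Finset.range (t+1+1), i !)
          * ((t+1+1)*(w+1+1))! * ∏ i, (L2 (w+1) t i)!) : ℕ) : ℚ)
        = ((2 * (m + 1) * (∏ i ∈ Finset.range (t+1+1), (w+1+1+i)!)
          * (((∏ i ∈ Finset.range t, (i + 3)) * ((∏ i ∈ Finset.range t, (i + 2)) * sfv t))
            * m !) : ℕ) : ℚ) := by
      exact_mod_cast congrArg (Nat.cast : ℕ → ℚ) (hm ▸ natIdA t w)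
    have hzqq : (((((∏ i ∈ Finset.range t, (i + 3)) * ((∏ i ∈ Finset.range t, (i + 2)) * sfv t)) : ℕ) : ℚ)) * ((m ! : ℕ) : ℚ)
        = ((∏ i, (L2 (w+1) t i)! : ℕ) : ℚ) * ((z : ℤ) : ℚ) := by
      exact_mod_cast congrArg (Int.cast : ℤ → ℚ) hz
    push_cast at hnatq hzqq ⊢
    linear_combination hnatq + (2 * ((m:ℚ) + 1)
      * ∏ i ∈ Finset.range (t+1+1), (((w+1+1+i)! : ℕ) : ℚ)) * hzqq
  · -- second ramification type
    have hco : 2 * ((((t+1+1)) * ((w+1+1)) : ℕ) : ℚ) - 2 - (((t+1) * ((w+1)+2) : ℕ) : ℚ)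
        = (((w+1) * (t+1+2) : ℕ) : ℚ) := by push_cast; ring
    have hdvd := key_dvd (L3 w t) m (by rw [hm]; exact sum_L3 w t)
    rw [V3_det w t] at hdvd
    obtain ⟨z, hz⟩ := hdvd
    have hP2pos : 0 < ∏ i, (L3 w t i)! :=
      Finset.prod_pos fun i _ => Nat.factorial_pos _
    have hC2pos : 0 < (∏ i ∈ Finset.range (t+1), (i + 3)) * sfv (t+1) :=
      Nat.mul_pos (Finset.prod_pos fun i _ => by omega) (sfv_pos (t+1))
    have hzpos : 0 < z := by
      have h1 : (0:ℤ) < ((∏ i, (L3 w t i)! : ℕ) : ℤ) * z := by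
        rw [← hz]
        exact_mod_cast Nat.mul_pos hC2pos (Nat.factorial_pos m)
      have h2 : (0:ℤ) < ((∏ i, (L3 w t i)! : ℕ) : ℤ) := by exact_mod_cast hP2pos
      by_contra hc
      push_neg at hc
      nlinarith
    refine ⟨z.toNat, by omega, ?_⟩
    have hzq : ((z.toNat : ℕ) : ℚ) = ((z : ℤ) : ℚ) := by
      exact_mod_cast congrArg (Int.cast : ℤ → ℚ) (Int.toNat_of_nonneg hzpos.le)
    rw [hzq, hco, hgq, div_eq_iff hDq, mul_div_assoc', div_eq_iff hPq]
    have hP2q : ((∏ i, (L3 w t i)! : ℕ) : ℚ) ≠ 0 := by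
      exact_mod_cast hP2pos.ne'
    refine mul_right_cancel₀ hP2q ?_
    have hnatq : ((((w+1) * (t+1+2)) * ((∏ i ∈ Finset.range (t+1+1), i !)
          * ((t+1+1)*(w+1+1))! * ∏ i, (L3 w t i)!) : ℕ) : ℚ)
        = ((2 * (m + 1) * (∏ i ∈ Finset.range (t+1+1), (w+1+1+i)!)
          * (((∏ i ∈ Finset.range (t+1), (i + 3)) * sfv (t+1)) * m !) : ℕ) : ℚ) := by
      exact_mod_cast congrArg (Nat.cast : ℕ → ℚ) (hm ▸ natIdB t w)
    have hzqq : ((((∏ i ∈ Finset.range (t+1), (i + 3)) * sfv (t+1) : ℕ) : ℚ)) * ((m ! : ℕ) : ℚ)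
        = ((∏ i, (L3 w t i)! : ℕ) : ℚ) * ((z : ℤ) : ℚ) := by
      exact_mod_cast congrArg (Int.cast : ℤ → ℚ) hz
    push_cast at hnatq hzqq ⊢
    linear_combination hnatq + (2 * ((m:ℚ) + 1)
      * ∏ i ∈ Finset.range (t+1+1), (((w+1+1+i)! : ℕ) : ℚ)) * hzqq
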